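/- Let 𝒜 be a C*-algebra. If every completely positive power bounded ℝ-linear operator on 𝒜_sa with spectral radius 1 has cyclic peripheral spectrum, then every bounded ℝ-linear operator L on 𝒜_sa such that sup_{t ∈ ℝ} ‖exp(tL)‖ < ∞ and exp(tL) is completely positive for every t ∈ ℝ satisfies exp(tL) = id for all t ∈ ℝ. -/

import Mathlib

open scoped ENNReal

variable {A : Type*} [NonUnitalCStarAlgebra A] [PartialOrder A] [StarOrderedRing A]

noncomputable instance : NormedSpace ℝ (selfAdjoint A) where
  norm_smul_le r x := norm_smul_le r (x : A)

instance : CompleteSpace (selfAdjoint A) :=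
  (isClosed_eq continuous_star continuous_id).completeSpace_coe

instance : IsTopologicalRing (selfAdjoint A →L[ℝ] selfAdjoint A) :=
  @NonUnitalSeminormedRing.toIsTopologicalRing _
    ContinuousLinearMap.toNormedRing.toNonUnitalNormedRing.toNonUnitalSeminormedRing

/-- A bounded real-linear operator on the self-adjoint part of a C*-algebra is *positive*
if it maps the positive cone into itself. -/
def IsPositiveOp (L : selfAdjoint A →L[ℝ] selfAdjoint A) : Prop :=
  ∀ x : selfAdjoint A, 0 ≤ x → 0 ≤ L x

/-- `L` is *quasi-positive* if `L + α • id` is positive for some `α ≥ 0`. -/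
def IsQuasiPositiveOp (L : selfAdjoint A →L[ℝ] selfAdjoint A) : Prop :=
  ∃ α : ℝ, 0 ≤ α ∧ IsPositiveOp (L + α • ContinuousLinearMap.id ℝ (selfAdjoint A))

/-- `L` is *exponentially positive* if `exp (t • L)` is positive for all `t ≥ 0`. -/
def IsExpPositiveOp (L : selfAdjoint A →L[ℝ] selfAdjoint A) : Prop :=
  ∀ t : ℝ, 0 ≤ t → IsPositiveOp (NormedSpace.exp (t • L))

/-- `L` is *cross positive* if `φ (L x) ≥ 0` whenever `x ≥ 0` and `φ` is a positive bounded
functional with `φ x = 0`. -/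
def IsCrossPositiveOp (L : selfAdjoint A →L[ℝ] selfAdjoint A) : Prop :=
  ∀ (x : selfAdjoint A) (φ : selfAdjoint A →L[ℝ] ℝ), 0 ≤ x →
    (∀ y : selfAdjoint A, 0 ≤ y → 0 ≤ φ y) → φ x = 0 → 0 ≤ φ (L x)

/-- An element of the C*-algebra of `k × k` matrices over `A` is positive if and only if it is
of the form `star x * x`. -/
def MatrixIsPositive {k : ℕ} (m : Matrix (Fin k) (Fin k) A) : Prop :=
  ∃ x : Matrix (Fin k) (Fin k) A, m = star x * x

/-- A bounded complex-linear operator `T` on `A` is *completely positive* if, for every `k`,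
applying `T` entrywise to `k × k` matrices over `A` maps positive matrices to positive
matrices. -/
def IsCompletelyPositiveC (T : A →L[ℂ] A) : Prop :=
  ∀ (k : ℕ) (m : Matrix (Fin k) (Fin k) A), MatrixIsPositive m → MatrixIsPositive (m.map T)

/-- `T : A →L[ℂ] A` extends the operator `L` on the self-adjoint part of `A`.  (Such an
extension is unique since `A = A_sa ⊕ i A_sa`.) -/
def ExtendsOp (L : selfAdjoint A →L[ℝ] selfAdjoint A) (T : A →L[ℂ] A) : Prop :=
  ∀ x : selfAdjoint A, T x = L x

/-- A bounded real-linear operator on the self-adjoint part of `A` is *completely positive*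
if its (unique) bounded complex-linear extension to `A` is completely positive. -/
def IsCompletelyPositiveOp (L : selfAdjoint A →L[ℝ] selfAdjoint A) : Prop :=
  ∃ T : A →L[ℂ] A, ExtendsOp L T ∧ IsCompletelyPositiveC T

/-- `L` is *power bounded* if `sup_n ‖L ^ n‖ < ∞`. -/
def PowerBounded (L : selfAdjoint A →L[ℝ] selfAdjoint A) : Prop :=
  ∃ C : ℝ, ∀ n : ℕ, ‖L ^ n‖ ≤ C

/-- A subset `S ⊆ ℂ` is *cyclic* if `r * exp (i θ) ∈ S` (with `r ≥ 0`, `θ ∈ ℝ`) implies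
`r * exp (i n θ) ∈ S` for every integer `n`. -/
def IsCyclicSet (S : Set ℂ) : Prop :=
  ∀ (r θ : ℝ), 0 ≤ r → (r : ℂ) * Complex.exp ((θ : ℂ) * Complex.I) ∈ S →
    ∀ n : ℤ, (r : ℂ) * Complex.exp ((n : ℂ) * (θ : ℂ) * Complex.I) ∈ S


section AuxiliaryLemmas

open scoped ComplexStarModule
open NormedSpace Complex Filter
open Complex.HadamardThreeLines

namespace CPAuxE

variable {E : Type*} [NormedRing E] [NormedAlgebra ℂ E] [CompleteSpace E]

lemma norm_eq_one_of_mem_spec [NormOneClass E] {T : E} {D : ℝ}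
    (hTn : ∀ n : ℕ, ‖T ^ n‖ ≤ D) {lam : ℂ} (hmem : lam ∈ spectrum ℂ T) : ‖lam‖ ≤ 1 := by
  by_contra hlt
  push_neg at hlt
  obtain ⟨n, hn⟩ := pow_unbounded_of_one_lt D hlt
  have h1 : lam ^ n ∈ spectrum ℂ (T ^ n) :=
    spectrum.pow_image_subset T n (Set.mem_image_of_mem _ hmem)
  have h2 := spectrum.norm_le_norm_of_mem h1
  rw [norm_pow] at h2
  exact absurd (h2.trans (hTn n)) (not_le.mpr hn)

/-- quantative quasinilpotent exp bound -/
lemma exp_norm_le_of_quasinilpotent [Nontrivial E] {N : E} (hsp : spectrum ℂ N ⊆ {0})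
    {ε : ℝ} (hε : 0 < ε) : ∃ D : ℝ, 1 ≤ D ∧ ∀ z : ℂ, ‖exp (z • N)‖ ≤ D * Real.exp (ε * ‖z‖) := by
  -- spectral radius is 0
  have hrad : spectralRadius ℂ N = 0 := by
    rw [spectralRadius]
    refine le_antisymm (iSup₂_le fun k hk => ?_) zero_le
    rcases hsp hk with rfl
    simp
  have hlim : Filter.Tendsto (fun n : ℕ => ‖N ^ n‖ ^ (1 / (n:ℝ))) Filter.atTop (nhds 0) := by
    have h1 := spectrum.pow_norm_pow_one_div_tendsto_nhds_spectralRadius N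
    rw [hrad] at h1
    have h2 := (ENNReal.tendsto_toReal (by simp)).comp h1
    refine h2.congr fun n => ?_
    simp [Function.comp, ENNReal.toReal_ofReal (Real.rpow_nonneg (norm_nonneg _) _)]
  have hev : ∀ᶠ n : ℕ in Filter.atTop, ‖N ^ n‖ ≤ ε ^ n := by
    have h3 : ∀ᶠ n : ℕ in Filter.atTop, ‖N ^ n‖ ^ (1 / (n:ℝ)) < ε :=
      hlim.eventually_lt_const hε
    filter_upwards [h3, Filter.eventually_gt_atTop 0] with n hn hn0
    have hnn : (0:ℝ) ≤ ‖N ^ n‖ ^ (1 / (n:ℝ)) := Real.rpow_nonneg (norm_nonneg _) _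
    calc ‖N ^ n‖ = (‖N ^ n‖ ^ (1 / (n:ℝ))) ^ (n:ℕ) := by
          rw [← Real.rpow_natCast (‖N ^ n‖ ^ (1 / (n:ℝ))), ← Real.rpow_mul (norm_nonneg _),
            one_div, inv_mul_cancel₀ (by exact_mod_cast hn0.ne'), Real.rpow_one]
      _ ≤ ε ^ n := pow_le_pow_left₀ hnn hn.le n
  obtain ⟨n₀, hn₀⟩ := hev.exists_forall_of_atTop
  set S : ℝ := ∑ k ∈ Finset.range n₀, ‖N ^ k‖ / ε ^ k with hS
  have hSnn : (0:ℝ) ≤ S :=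
    Finset.sum_nonneg fun k _ => div_nonneg (norm_nonneg _) (pow_nonneg hε.le _)
  set D : ℝ := 1 + S with hD
  have hD1 : 1 ≤ D := by simp only [hD]; linarith
  have key : ∀ n : ℕ, ‖N ^ n‖ ≤ D * ε ^ n := by
    intro n
    rcases le_or_gt n₀ n with h | h
    · calc ‖N ^ n‖ ≤ ε ^ n := hn₀ n h
        _ ≤ D * ε ^ n := le_mul_of_one_le_left (pow_nonneg hε.le _) hD1
    · have hmem : n ∈ Finset.range n₀ := Finset.mem_range.mpr h
      have h1 : ‖N ^ n‖ / ε ^ n ≤ ∑ k ∈ Finset.range n₀, ‖N ^ k‖ / ε ^ k :=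
        Finset.single_le_sum (f := fun k => ‖N ^ k‖ / ε ^ k)
          (fun k _ => div_nonneg (norm_nonneg _) (pow_nonneg hε.le _)) hmem
      have h2 : ‖N ^ n‖ / ε ^ n ≤ D := by simp only [hD]; linarith
      calc ‖N ^ n‖ = ‖N ^ n‖ / ε ^ n * ε ^ n := by
            field_simp
        _ ≤ D * ε ^ n := mul_le_mul_of_nonneg_right h2 (pow_nonneg hε.le n)
  refine ⟨D, hD1, fun z => ?_⟩
  rw [exp_eq_tsum ℂ]
  have hterm : ∀ n : ℕ, ‖((n.factorial:ℂ))⁻¹ • (z • N) ^ n‖ ≤ D * (ε * ‖z‖) ^ n / n.factorial := by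
    intro n
    rw [smul_pow, norm_smul, norm_smul, norm_inv, norm_pow]
    rw [Complex.norm_natCast]
    calc ((n.factorial:ℝ))⁻¹ * (‖z‖ ^ n * ‖N ^ n‖)
        ≤ ((n.factorial:ℝ))⁻¹ * (‖z‖ ^ n * (D * ε ^ n)) := by
          gcongr
          exact key n
      _ = D * (ε * ‖z‖) ^ n / n.factorial := by rw [mul_pow]; ring
  have hsum2 : Summable fun n : ℕ => D * (ε * ‖z‖) ^ n / n.factorial := by
    simpa [mul_div_assoc] using (Real.summable_pow_div_factorial (ε * ‖z‖)).mul_left D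
  have hsum1 : Summable fun n : ℕ => ‖((n.factorial:ℂ))⁻¹ • (z • N) ^ n‖ :=
    Summable.of_nonneg_of_le (fun n => norm_nonneg _) hterm hsum2
  calc ‖∑' n : ℕ, ((n.factorial:ℂ))⁻¹ • (z • N) ^ n‖
      ≤ ∑' n : ℕ, ‖((n.factorial:ℂ))⁻¹ • (z • N) ^ n‖ := norm_tsum_le_tsum_norm hsum1
    _ ≤ ∑' n : ℕ, D * (ε * ‖z‖) ^ n / n.factorial := Summable.tsum_le_tsum hterm hsum1 hsum2
    _ = D * Real.exp (ε * ‖z‖) := by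
        rw [Real.exp_eq_exp_ℝ, exp_eq_tsum_div]
        simp_rw [mul_div_assoc]
        rw [tsum_mul_left]

lemma exp_bounded_im_nonneg [Nontrivial E] {N : E} {C : ℝ} (hC : 1 ≤ C)
    (hreal : ∀ x : ℝ, ‖exp ((x:ℂ) • N)‖ ≤ C) (hsp : spectrum ℂ N ⊆ {0}) :
    ∀ w : ℂ, 0 ≤ w.im → ‖exp (w • N)‖ ≤ C := by
  have hC0 : (0:ℝ) < C := lt_of_lt_of_le one_pos hC
  have hdiff : Differentiable ℂ (fun u : ℂ => exp (u • N)) :=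
    fun u => (hasDerivAt_exp_smul_const N u).differentiableAt
  intro w hw
  rcases eq_or_lt_of_le hw with h0 | him
  · have hwre : w = ((w.re : ℝ) : ℂ) := by
      apply Complex.ext <;> simp [← h0]
    rw [hwre]; exact hreal w.re
  · suffices hs : ∀ ε > (0:ℝ), ‖exp (w • N)‖ ≤ C * Real.exp (ε * w.im) by
      have hlim : Tendsto (fun m : ℕ => C * Real.exp ((1/((m:ℝ)+1)) * w.im)) atTop
          (nhds (C * Real.exp (0 * w.im))) := by
        apply Tendsto.const_mul
        exact (Real.continuous_exp.tendsto _).comp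
          (tendsto_one_div_add_atTop_nhds_zero_nat.mul_const w.im)
      have hle := ge_of_tendsto' hlim fun m => hs (1/((m:ℝ)+1)) (by positivity)
      simpa using hle
    intro ε hε
    obtain ⟨D, hD1, hDb⟩ := exp_norm_le_of_quasinilpotent hsp hε
    have hDpos : (0:ℝ) < D := lt_of_lt_of_le one_pos hD1
    suffices hm : ∀ m : ℕ, ‖exp (w • N)‖ ≤
        C * Real.exp (ε * w.im) * Real.exp ((1/((m:ℝ)+1)) * Real.log D) by
      have hlim2 : Tendsto (fun m : ℕ =>
          C * Real.exp (ε * w.im) * Real.exp ((1/((m:ℝ)+1)) * Real.log D)) atTop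
          (nhds (C * Real.exp (ε * w.im) * Real.exp (0 * Real.log D))) := by
        apply Tendsto.const_mul
        exact (Real.continuous_exp.tendsto _).comp
          (tendsto_one_div_add_atTop_nhds_zero_nat.mul_const (Real.log D))
      have hle := ge_of_tendsto' hlim2 hm
      simpa using hle
    intro m
    have hm1 : (0:ℝ) < (m:ℝ)+1 := by positivity
    set Y : ℝ := w.im * ((m:ℝ)+1) with hYdef
    have hYpos : 0 < Y := by positivity
    set g : ℂ → E := fun z => exp ((↑w.re + Complex.I * ↑Y * z) • N) with hg
    have hgdiff : Differentiable ℂ g := by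
      apply hdiff.comp
      exact (differentiable_const _).add ((differentiable_const _).mul differentiable_id)
    have hsplit : ∀ z : ℂ, g z = exp (((w.re - Y * z.im : ℝ) : ℂ) • N) *
        exp ((Complex.I * ((Y * z.re : ℝ) : ℂ)) • N) := by
      intro z
      rw [hg]
      simp only
      have hsc : (↑w.re + Complex.I * ↑Y * z) =
          ((w.re - Y * z.im : ℝ) : ℂ) + Complex.I * ((Y * z.re : ℝ):ℂ) := by
        apply Complex.ext <;>
          simp [Complex.mul_re, Complex.mul_im] <;> ring
      rw [hsc, add_smul]
      letI : NormedAlgebra ℚ E := .restrictScalars ℚ ℂ E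
      exact exp_add_of_commute (((Commute.refl N).smul_left _).smul_right _)
    have hb2 : ∀ z : ℂ, ‖exp ((Complex.I * ((Y * z.re : ℝ):ℂ)) • N)‖ ≤
        D * Real.exp (ε * (|Y| * |z.re|)) := by
      intro z
      have h := hDb (Complex.I * ((Y * z.re : ℝ):ℂ))
      simpa using h
    have hgb : ∀ z : ℂ, z ∈ verticalClosedStrip 0 1 → ‖g z‖ ≤ C * (D * Real.exp (ε * Y)) := by
      intro z hz
      have hz0 : 0 ≤ z.re := hz.1
      have hz1 : z.re ≤ 1 := hz.2
      rw [hsplit z]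
      calc ‖exp (((w.re - Y * z.im : ℝ) : ℂ) • N) * exp ((Complex.I * ((Y * z.re : ℝ):ℂ)) • N)‖
          ≤ ‖exp (((w.re - Y * z.im : ℝ) : ℂ) • N)‖ * ‖exp ((Complex.I * ((Y * z.re : ℝ):ℂ)) • N)‖ :=
            norm_mul_le _ _
        _ ≤ C * (D * Real.exp (ε * (|Y| * |z.re|))) := by
            apply mul_le_mul (hreal _) (hb2 z) (norm_nonneg _) hC0.le
        _ ≤ C * (D * Real.exp (ε * Y)) := by
            gcongr
            rw [_root_.abs_of_nonneg hYpos.le, _root_.abs_of_nonneg hz0]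
            calc Y * z.re ≤ Y * 1 := by gcongr
              _ = Y := mul_one Y
    have hBdd : BddAbove ((norm ∘ g) '' verticalClosedStrip 0 1) := by
      refine ⟨C * (D * Real.exp (ε * Y)), ?_⟩
      rintro x ⟨z, hz, rfl⟩
      exact hgb z hz
    have ha : ∀ z ∈ Complex.re ⁻¹' {0}, ‖g z‖ ≤ C := by
      intro z hz
      rw [Set.mem_preimage, Set.mem_singleton_iff] at hz
      rw [hsplit z, hz, mul_zero]
      simp only [Complex.ofReal_zero, mul_zero, zero_smul, NormedSpace.exp_zero, mul_one]
      exact hreal _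
    have hbnd : ∀ z ∈ Complex.re ⁻¹' {1}, ‖g z‖ ≤ C * (D * Real.exp (ε * Y)) := by
      intro z hz
      rw [Set.mem_preimage, Set.mem_singleton_iff] at hz
      exact hgb z (by simp [verticalClosedStrip, hz])
    set θ : ℝ := 1/((m:ℝ)+1) with hθ
    have hθpos : 0 < θ := by positivity
    have hθle : θ ≤ 1 := by
      rw [hθ, div_le_one hm1]; linarith [Nat.cast_nonneg (α := ℝ) m]
    set z₀ : ℂ := ((θ : ℝ) : ℂ) with hz₀
    have hz₀re : z₀.re = θ := Complex.ofReal_re _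
    have hz₀mem : z₀ ∈ verticalClosedStrip 0 1 := by
      simp only [verticalClosedStrip, Set.mem_preimage, hz₀re, Set.mem_Icc]
      exact ⟨hθpos.le, hθle⟩
    have hH := norm_le_interp_of_mem_verticalClosedStrip' (f := g) zero_lt_one hz₀mem
      hgdiff.diffContOnCl hBdd ha hbnd
    have hgz₀ : g z₀ = exp (w • N) := by
      rw [hg]
      simp only
      congr 1
      have : (↑w.re + Complex.I * ↑Y * z₀) = w := by
        apply Complex.ext
        · simp [hz₀, Complex.mul_re, Complex.mul_im]
        · simp [hz₀, Complex.mul_re, Complex.mul_im, hYdef, hθ, Complex.normSq_apply]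
          field_simp
      rw [this]
    rw [hgz₀, hz₀re, sub_zero, sub_zero, div_one] at hH
    have hYθ : Y * θ = w.im := by
      rw [hYdef, hθ]; field_simp
    calc ‖exp (w • N)‖ ≤ C ^ (1 - θ) * (C * (D * Real.exp (ε * Y))) ^ θ := hH
      _ = C * Real.exp (ε * w.im) * Real.exp (θ * Real.log D) := by
          rw [Real.mul_rpow hC0.le (by positivity), Real.mul_rpow hDpos.le (by positivity)]
          rw [← mul_assoc, ← mul_assoc, ← Real.rpow_add hC0, sub_add_cancel, Real.rpow_one]
          rw [Real.rpow_def_of_pos hDpos, Real.rpow_def_of_pos (Real.exp_pos _), Real.log_exp]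
          rw [show ε * Y * θ = ε * (Y * θ) by ring, hYθ]
          ring
  
lemma group_quasinilpotent_eq_zero [Nontrivial E] {N : E} {C : ℝ} (hC : 1 ≤ C)
    (hreal : ∀ x : ℝ, ‖exp ((x:ℂ) • N)‖ ≤ C) (hsp : spectrum ℂ N ⊆ {0}) : N = 0 := by
  have hspneg : spectrum ℂ (-N) ⊆ {0} := by
    intro z hz
    have hrw : -N = (-1 : ℂˣ) • N := by simp [Units.smul_def]
    rw [hrw, spectrum.unit_smul_eq_smul] at hz
    obtain ⟨z', hz', rfl⟩ := hz
    have := hsp hz'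
    simp only [Set.mem_singleton_iff] at this ⊢
    simp [this]
  have hrealneg : ∀ x : ℝ, ‖exp ((x:ℂ) • (-N))‖ ≤ C := by
    intro x
    have h := hreal (-x)
    rw [show (((-x : ℝ)):ℂ) • N = (x:ℂ) • (-N) by push_cast; rw [smul_neg, ← neg_smul]] at h
    exact h
  have hb : ∀ z : ℂ, ‖exp (z • N)‖ ≤ C := by
    intro z
    rcases le_or_gt 0 z.im with h | h
    · exact exp_bounded_im_nonneg hC hreal hsp z h
    · have h2 := exp_bounded_im_nonneg hC hrealneg hspneg (-z) (by simp; linarith)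
      rwa [smul_neg, neg_smul, neg_neg] at h2
  have hdiff : Differentiable ℂ (fun u : ℂ => exp (u • N)) :=
    fun u => (hasDerivAt_exp_smul_const N u).differentiableAt
  have hbdd : Bornology.IsBounded (Set.range fun u : ℂ => exp (u • N)) := by
    rw [isBounded_iff_forall_norm_le]
    refine ⟨C, ?_⟩
    rintro x ⟨u, rfl⟩
    exact hb u
  have hconst : ∀ z : ℂ, exp (z • N) = 1 := by
    intro z
    have h := hdiff.apply_eq_apply_of_bounded hbdd z 0
    rwa [zero_smul, NormedSpace.exp_zero] at h
  have h1 : HasDerivAt (fun u : ℂ => exp (u • N)) (exp ((0:ℂ) • N) * N) 0 :=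
    hasDerivAt_exp_smul_const N 0
  have hfun : (fun u : ℂ => exp (u • N)) = fun _ : ℂ => (1:E) := funext hconst
  rw [hfun] at h1
  have h2 : HasDerivAt (fun _ : ℂ => (1:E)) 0 0 := hasDerivAt_const _ _
  have h3 := h1.unique h2
  rwa [zero_smul, NormedSpace.exp_zero, one_mul] at h3

end CPAuxE

namespace CPAux

variable {A : Type*} [NonUnitalCStarAlgebra A] [PartialOrder A] [StarOrderedRing A]


lemma norm_realPart_le (a : A) : ‖(ℜ a : A)‖ ≤ ‖a‖ := by
  rw [realPart_apply_coe]
  calc ‖(2:ℝ)⁻¹ • (a + star a)‖ ≤ (2:ℝ)⁻¹ * (‖a‖ + ‖star a‖) := by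
        rw [norm_smul]
        simp only [norm_inv, Real.norm_ofNat]
        gcongr
        exact norm_add_le _ _
    _ = ‖a‖ := by rw [norm_star]; ring

lemma norm_imaginaryPart_le (a : A) : ‖(ℑ a : A)‖ ≤ ‖a‖ := by
  rw [imaginaryPart_apply_coe]
  rw [norm_smul, norm_smul]
  simp only [norm_neg, Complex.norm_I, one_mul, norm_inv, Real.norm_ofNat]
  calc (2:ℝ)⁻¹ * ‖a - star a‖ ≤ (2:ℝ)⁻¹ * (‖a‖ + ‖star a‖) := by
        gcongr; exact norm_sub_le _ _
    _ = ‖a‖ := by rw [norm_star]; ring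

/-- The complexification of a real-linear operator on selfadjoint part, as a linear map. -/
noncomputable def cxLinear (L : selfAdjoint A →L[ℝ] selfAdjoint A) : A →ₗ[ℂ] A where
  toFun a := (L (ℜ a) : A) + Complex.I • (L (ℑ a) : A)
  map_add' a b := by
    simp only [map_add, AddSubgroup.coe_add, smul_add]
    abel
  map_smul' z a := by
    simp only [RingHom.id_apply, realPart_smul, imaginaryPart_smul, map_sub, map_add, map_smul,
      AddSubgroup.coe_sub, AddSubgroup.coe_add]
    have hs : ∀ (c : ℝ) (y : A), c • y = (c : ℂ) • y := fun c y => (Complex.coe_smul c y).symm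
    set r := (L (ℜ a) : A)
    set i := (L (ℑ a) : A)
    have hr : ((z.re • L (ℜ a) : selfAdjoint A) : A) = (z.re:ℂ) • r := by
      rw [selfAdjoint.val_smul, hs]
    have hi : ((z.re • L (ℑ a) : selfAdjoint A) : A) = (z.re:ℂ) • i := by
      rw [selfAdjoint.val_smul, hs]
    have hr' : ((z.im • L (ℜ a) : selfAdjoint A) : A) = (z.im:ℂ) • r := by
      rw [selfAdjoint.val_smul, hs]
    have hi' : ((z.im • L (ℑ a) : selfAdjoint A) : A) = (z.im:ℂ) • i := by
      rw [selfAdjoint.val_smul, hs]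
    rw [hr, hi, hr', hi']
    match_scalars <;> simp [Complex.ext_iff] <;> ring

lemma cxLinear_apply (L : selfAdjoint A →L[ℝ] selfAdjoint A) (a : A) :
    cxLinear L a = (L (ℜ a) : A) + Complex.I • (L (ℑ a) : A) := rfl

lemma cxLinear_bound (L : selfAdjoint A →L[ℝ] selfAdjoint A) (a : A) :
    ‖cxLinear L a‖ ≤ 2 * ‖L‖ * ‖a‖ := by
  rw [cxLinear_apply]
  calc ‖(L (ℜ a) : A) + Complex.I • (L (ℑ a) : A)‖
      ≤ ‖(L (ℜ a) : A)‖ + ‖Complex.I • (L (ℑ a) : A)‖ := norm_add_le _ _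
    _ = ‖L (ℜ a)‖ + ‖L (ℑ a)‖ := by
        rw [norm_smul, Complex.norm_I, one_mul]
        rfl
    _ ≤ ‖L‖ * ‖ℜ a‖ + ‖L‖ * ‖ℑ a‖ := by
        gcongr <;> exact L.le_opNorm _
    _ ≤ ‖L‖ * ‖a‖ + ‖L‖ * ‖a‖ := by
        gcongr
        · exact norm_realPart_le a
        · exact norm_imaginaryPart_le a
    _ = 2 * ‖L‖ * ‖a‖ := by ring

/-- The complexification as a continuous linear map. -/
noncomputable def cx (L : selfAdjoint A →L[ℝ] selfAdjoint A) : A →L[ℂ] A :=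
  (cxLinear L).mkContinuous (2 * ‖L‖) (cxLinear_bound L)

lemma cx_apply (L : selfAdjoint A →L[ℝ] selfAdjoint A) (a : A) :
    cx L a = (L (ℜ a) : A) + Complex.I • (L (ℑ a) : A) := rfl

lemma realPart_coe (x : selfAdjoint A) : ℜ ((x : A)) = x :=
  Subtype.ext (x.prop.coe_realPart)

lemma imaginaryPart_coe (x : selfAdjoint A) : ℑ ((x : A)) = 0 :=
  x.prop.imaginaryPart

lemma extendsOp_cx (L : selfAdjoint A →L[ℝ] selfAdjoint A) : ExtendsOp L (cx L) := by
  intro x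
  rw [cx_apply, realPart_coe, imaginaryPart_coe, map_zero]
  simp

lemma extends_eq_cx {L : selfAdjoint A →L[ℝ] selfAdjoint A} {T : A →L[ℂ] A}
    (h : ExtendsOp L T) : T = cx L := by
  ext a
  conv_lhs => rw [← realPart_add_I_smul_imaginaryPart a]
  rw [map_add, map_smul, h (ℜ a), h (ℑ a), cx_apply]

lemma extendsOp_unique {L : selfAdjoint A →L[ℝ] selfAdjoint A} {T S : A →L[ℂ] A}
    (h1 : ExtendsOp L T) (h2 : ExtendsOp L S) : T = S := by
  rw [extends_eq_cx h1, extends_eq_cx h2]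

lemma extends_norm_le {L : selfAdjoint A →L[ℝ] selfAdjoint A} {T : A →L[ℂ] A}
    (h : ExtendsOp L T) : ‖T‖ ≤ 2 * ‖L‖ := by
  refine T.opNorm_le_bound (by positivity) fun a => ?_
  rw [extends_eq_cx h]
  exact cxLinear_bound L a

lemma extends_mul {L M : selfAdjoint A →L[ℝ] selfAdjoint A} {T S : A →L[ℂ] A}
    (h1 : ExtendsOp L T) (h2 : ExtendsOp M S) : ExtendsOp (L * M) (T * S) := by
  intro x
  rw [ContinuousLinearMap.mul_apply, h2 x, h1 (M x), ContinuousLinearMap.mul_apply]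

lemma extendsOp_one : ExtendsOp (1 : selfAdjoint A →L[ℝ] selfAdjoint A) (1 : A →L[ℂ] A) := by
  intro x; rfl

lemma extends_pow {L : selfAdjoint A →L[ℝ] selfAdjoint A} {T : A →L[ℂ] A}
    (h : ExtendsOp L T) (n : ℕ) : ExtendsOp (L ^ n) (T ^ n) := by
  induction n with
  | zero => simpa using extendsOp_one
  | succ n ih => rw [pow_succ, pow_succ]; exact extends_mul ih h

lemma cx_smul (t : ℝ) (L : selfAdjoint A →L[ℝ] selfAdjoint A) : cx (t • L) = t • cx L := by
  ext a
  rw [ContinuousLinearMap.smul_apply, cx_apply, cx_apply]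
  simp only [ContinuousLinearMap.smul_apply, selfAdjoint.val_smul, smul_add]
  rw [smul_comm t Complex.I]

/-- the inclusion of the selfadjoint part as a continuous linear map -/
noncomputable def ιsa : selfAdjoint A →L[ℝ] A where
  toFun := Subtype.val
  map_add' _ _ := rfl
  map_smul' _ _ := rfl
  cont := continuous_subtype_val

@[simp] lemma ιsa_apply (x : selfAdjoint A) : (ιsa x : A) = (x : A) := rfl

lemma extends_exp (M : selfAdjoint A →L[ℝ] selfAdjoint A) :
    ExtendsOp (exp M) (exp (cx M)) := by
  intro x
  have h1 : HasSum (fun n : ℕ => ((n.factorial : ℂ))⁻¹ • ((cx M ^ n) (x : A)))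
      ((exp (cx M)) (x : A)) := by
    have h := expSeries_hasSum_exp (𝕂 := ℂ) (cx M)
    simp_rw [expSeries_apply_eq] at h
    have h2 := h.mapL (ContinuousLinearMap.apply ℂ A (x : A))
    simpa using h2
  have h2 : HasSum (fun n : ℕ => ((n.factorial : ℝ))⁻¹ • ((M ^ n) x))
      ((exp M) x) := by
    have h := expSeries_hasSum_exp (𝕂 := ℝ) M
    simp_rw [expSeries_apply_eq] at h
    have h2 := h.mapL (ContinuousLinearMap.apply ℝ (selfAdjoint A) x)
    simpa using h2
  have h3 : HasSum (fun n : ℕ => ((n.factorial : ℝ))⁻¹ • (((M ^ n) x : selfAdjoint A) : A))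
      (((exp M) x : selfAdjoint A) : A) := by
    have h4 := h2.mapL (ιsa (A := A))
    simpa using h4
  have h5 : (fun n : ℕ => ((n.factorial : ℂ))⁻¹ • ((cx M ^ n) (x : A))) =
      fun n : ℕ => ((n.factorial : ℝ))⁻¹ • (((M ^ n) x : selfAdjoint A) : A) := by
    funext n
    rw [extends_pow (extendsOp_cx M) n x]
    rw [show ((n.factorial : ℂ))⁻¹ = (((n.factorial : ℝ))⁻¹ : ℝ) • (1:ℂ) by push_cast; simp]
    rw [smul_assoc, one_smul]
  rw [h5] at h1
  exact h1.unique h3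

end CPAux

end AuxiliaryLemmas

set_option synthInstance.maxHeartbeats 1000000
set_option maxHeartbeats 1000000

/-- If every completely positive power bounded real-linear operator on the self-adjoint part
of a C*-algebra `A` with spectral radius `1` has cyclic peripheral spectrum, then every
bounded, completely positive one-parameter group `(exp (t • L))_{t ∈ ℝ}` on the self-adjoint
part of `A` is trivial. -/
theorem bounded_completelyPositive_group_trivial_of_cyclic_peripheralSpectrum
    (hcyc : ∀ (L : selfAdjoint A →L[ℝ] selfAdjoint A) (T : A →L[ℂ] A), ExtendsOp L T →
      IsCompletelyPositiveC T → PowerBounded L → spectralRadius ℂ T = 1 →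
      IsCyclicSet {μ : ℂ | μ ∈ spectrum ℂ T ∧ (‖μ‖₊ : ℝ≥0∞) = spectralRadius ℂ T}) :
    ∀ L : selfAdjoint A →L[ℝ] selfAdjoint A,
      (∃ C : ℝ, ∀ t : ℝ, ‖NormedSpace.exp (t • L)‖ ≤ C) →
      (∀ t : ℝ, IsCompletelyPositiveOp (NormedSpace.exp (t • L))) →
      ∀ t : ℝ, NormedSpace.exp (t • L) = ContinuousLinearMap.id ℝ (selfAdjoint A) := by
  intro L hbd hcp t
  letI : NormedAlgebra ℚ (A →L[ℂ] A) := .restrictScalars ℚ ℂ (A →L[ℂ] A)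
  letI : NormedAlgebra ℚ (selfAdjoint A →L[ℝ] selfAdjoint A) :=
    .restrictScalars ℚ ℝ (selfAdjoint A →L[ℝ] selfAdjoint A)
  rcases subsingleton_or_nontrivial A with hA | hA
  · haveI : Subsingleton (selfAdjoint A) := ⟨fun a b => Subtype.ext (Subsingleton.elim _ _)⟩
    ext x
    exact Subsingleton.elim _ _
  obtain ⟨C₀, hC₀⟩ := hbd
  set C : ℝ := max C₀ 1 with hCdef
  have hC1 : (1:ℝ) ≤ C := le_max_right _ _
  have hC : ∀ s : ℝ, ‖NormedSpace.exp (s • L)‖ ≤ C := fun s => (hC₀ s).trans (le_max_left _ _)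
  haveI : Nontrivial (A →L[ℂ] A) := by
    obtain ⟨a, ha⟩ := exists_ne (0 : A)
    refine ⟨1, 0, fun h => ha ?_⟩
    calc a = (1 : A →L[ℂ] A) a := rfl
      _ = (0 : A →L[ℂ] A) a := by rw [h]
      _ = 0 := rfl
  set N : A →L[ℂ] A := CPAux.cx L with hN
  have hFext : ∀ s : ℝ, ExtendsOp (NormedSpace.exp (s • L)) (NormedSpace.exp (s • N)) := by
    intro s
    have h := CPAux.extends_exp (s • L)
    rwa [CPAux.cx_smul] at h
  have hFnorm : ∀ s : ℝ, ‖NormedSpace.exp (s • N)‖ ≤ 2 * C := by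
    intro s
    refine (CPAux.extends_norm_le (hFext s)).trans ?_
    have := hC s; linarith
  have hpowN : ∀ (s : ℝ) (n : ℕ),
      (NormedSpace.exp (s • N)) ^ n = NormedSpace.exp (((n:ℝ) * s) • N) := by
    intro s n
    conv_rhs => rw [← smul_smul, Nat.cast_smul_eq_nsmul ℝ (n:ℕ) (s • N)]
    rw [NormedSpace.exp_nsmul]
  have hpowL : ∀ (s : ℝ) (n : ℕ),
      (NormedSpace.exp (s • L)) ^ n = NormedSpace.exp (((n:ℝ) * s) • L) := by
    intro s n
    rw [show ((n:ℝ) * s) • L = (n:ℕ) • (s • L) from ContinuousLinearMap.ext fun x => by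
      simp [mul_smul]; exact (Nat.cast_smul_eq_nsmul ℝ n _).trans (smul_comm s n (L x)).symm]
    exact (NormedSpace.exp_nsmul n (s • L)).symm
  have hpownorm : ∀ (s : ℝ) (n : ℕ), ‖(NormedSpace.exp (s • N)) ^ n‖ ≤ 2 * C := by
    intro s n
    rw [hpowN s n]
    exact hFnorm _
  have hmul : ∀ s u : ℝ,
      NormedSpace.exp (s • N) * NormedSpace.exp (u • N) = NormedSpace.exp ((s + u) • N) := by
    intro s u
    rw [add_smul]
    exact (NormedSpace.exp_add_of_commute (((Commute.refl N).smul_left s).smul_right u)).symm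
  have hinv : ∀ s : ℝ, NormedSpace.exp (s • N) * NormedSpace.exp ((-s) • N) = 1 := by
    intro s
    rw [hmul, add_neg_cancel, zero_smul, NormedSpace.exp_zero]
  have hmod : ∀ (s : ℝ) (lam : ℂ), lam ∈ spectrum ℂ (NormedSpace.exp (s • N)) → ‖lam‖ = 1 := by
    intro s lam hlam
    have hle : ‖lam‖ ≤ 1 := CPAuxE.norm_eq_one_of_mem_spec (fun n => hpownorm s n) hlam
    set u : (A →L[ℂ] A)ˣ :=
      { val := NormedSpace.exp (s • N), inv := NormedSpace.exp ((-s) • N),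
        val_inv := hinv s, inv_val := by have h := hinv (-s); rwa [neg_neg] at h } with hu
    have hlam0 : lam ≠ 0 := by
      intro h
      rw [h] at hlam
      exact (spectrum.zero_notMem_iff ℂ).mpr u.isUnit hlam
    have hinvmem : ((Units.mk0 lam hlam0)⁻¹ : ℂˣ).val ∈
        spectrum ℂ ((u⁻¹ : (A →L[ℂ] A)ˣ) : A →L[ℂ] A) :=
      spectrum.inv_mem_iff.mp (by exact hlam)
    have hval : ((u⁻¹ : (A →L[ℂ] A)ˣ) : A →L[ℂ] A) = NormedSpace.exp ((-s) • N) := rfl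
    rw [hval] at hinvmem
    have hle2 : ‖((Units.mk0 lam hlam0)⁻¹ : ℂˣ).val‖ ≤ 1 :=
      CPAuxE.norm_eq_one_of_mem_spec (fun n => hpownorm (-s) n) hinvmem
    have hle3 : ‖lam‖⁻¹ ≤ 1 := by
      rwa [show ((Units.mk0 lam hlam0)⁻¹ : ℂˣ).val = lam⁻¹ from rfl, norm_inv] at hle2
    have hpos : 0 < ‖lam‖ := norm_pos_iff.mpr hlam0
    have hmulinv : ‖lam‖ * ‖lam‖⁻¹ = 1 := mul_inv_cancel₀ hpos.ne'
    refine le_antisymm hle ?_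
    nlinarith
  have hnn1 : ∀ (s : ℝ) (lam : ℂ), lam ∈ spectrum ℂ (NormedSpace.exp (s • N)) →
      (‖lam‖₊ : ℝ≥0∞) = 1 := by
    intro s lam hlam
    have h1 : ‖lam‖₊ = (1 : NNReal) := NNReal.coe_injective (by simp [hmod s lam hlam])
    rw [h1, ENNReal.coe_one]
  have hradius : ∀ s : ℝ, spectralRadius ℂ (NormedSpace.exp (s • N)) = 1 := by
    intro s
    obtain ⟨lam, hlam⟩ := spectrum.nonempty (NormedSpace.exp (s • N))
    rw [spectralRadius]
    apply le_antisymm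
    · exact iSup₂_le fun k hk => le_of_eq (hnn1 s k hk)
    · have h1 := le_iSup₂ (f := fun (k : ℂ) (_ : k ∈ spectrum ℂ (NormedSpace.exp (s • N))) =>
        (‖k‖₊ : ℝ≥0∞)) lam hlam
      rwa [hnn1 s lam hlam] at h1
  have hCP : ∀ s : ℝ, IsCompletelyPositiveC (NormedSpace.exp (s • N)) := by
    intro s
    obtain ⟨T, hT, hTcp⟩ := hcp s
    rwa [CPAux.extendsOp_unique hT (hFext s)] at hTcp
  have hPB : ∀ s : ℝ, PowerBounded (NormedSpace.exp (s • L)) :=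
    fun s => ⟨C, fun n => by rw [hpowL s n]; exact hC _⟩
  have hspec : ∀ s : ℝ, spectrum ℂ (NormedSpace.exp (s • N)) = {1} := by
    intro s
    rw [Set.eq_singleton_iff_nonempty_unique_mem]
    refine ⟨spectrum.nonempty _, ?_⟩
    intro lam hlam
    by_contra hne1
    have hcont : Continuous fun v : ℝ => NormedSpace.exp (v • N) :=
      NormedSpace.exp_continuous.comp (continuous_id.smul continuous_const)
    have htend : Filter.Tendsto (fun v : ℝ => ‖NormedSpace.exp (v • N) - 1‖)
        (nhds 0) (nhds 0) := by
      have h1 : Filter.Tendsto (fun v : ℝ => NormedSpace.exp (v • N) - 1) (nhds 0)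
          (nhds (NormedSpace.exp ((0:ℝ) • N) - 1)) := (hcont.sub continuous_const).tendsto 0
      rw [zero_smul, NormedSpace.exp_zero, sub_self] at h1
      simpa using h1.norm
    have hev : ∀ᶠ v : ℝ in nhds 0, ‖NormedSpace.exp (v • N) - 1‖ < 1/2 :=
      htend.eventually_lt_const (by norm_num)
    obtain ⟨δ, hδpos, hδ⟩ := Metric.eventually_nhds_iff.mp hev
    set m : ℕ := ⌊|s| / δ⌋₊ + 1 with hm
    have hm0 : 0 < m := Nat.succ_pos _
    have hmpos : 0 < (m:ℝ) := by exact_mod_cast hm0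
    set v : ℝ := s / m with hv
    have hsv : (m:ℝ) * v = s := by rw [hv]; field_simp
    have hvsmall : |v| < δ := by
      rw [hv, abs_div, abs_of_nonneg hmpos.le, div_lt_iff₀ hmpos]
      have h2 : |s| / δ < (m:ℝ) := by
        rw [hm]; push_cast; exact Nat.lt_floor_add_one _
      calc |s| = (|s|/δ) * δ := by field_simp
        _ < (m:ℝ) * δ := mul_lt_mul_of_pos_right h2 hδpos
        _ = δ * m := mul_comm _ _
    have hsmall : ‖NormedSpace.exp (v • N) - 1‖ < 1/2 :=
      hδ (by rw [Real.dist_eq, sub_zero]; exact hvsmall)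
    have hsub : ∀ ν : ℂ, ν ∈ spectrum ℂ (NormedSpace.exp (v • N)) → ‖ν - 1‖ < 1/2 := by
      intro ν hν
      have hmem : ν - 1 ∈ spectrum ℂ (NormedSpace.exp (v • N) - 1) := by
        rw [spectrum.mem_iff] at hν ⊢
        have heq : algebraMap ℂ (A →L[ℂ] A) (ν - 1) - (NormedSpace.exp (v • N) - 1) =
            algebraMap ℂ (A →L[ℂ] A) ν - NormedSpace.exp (v • N) := by
          rw [map_sub, map_one]; abel
        rwa [heq]
      exact lt_of_le_of_lt (spectrum.norm_le_norm_of_mem hmem) hsmall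
    have hsq : ∀ ν : ℂ, ‖ν‖ = 1 → ‖ν - 1‖^2 = 2 - 2 * ν.re := by
      intro ν hν
      have h1 : ν.re * ν.re + ν.im * ν.im = 1 := by
        have h2 := Complex.sq_norm ν
        rw [Complex.normSq_apply] at h2
        rw [hν] at h2
        linarith [h2.symm]
      have h3 : ‖ν - 1‖^2 = (ν.re - 1) * (ν.re - 1) + ν.im * ν.im := by
        have h4 := Complex.sq_norm (ν - 1)
        rw [Complex.normSq_apply, Complex.sub_re, Complex.sub_im, Complex.one_re,
          Complex.one_im, sub_zero] at h4
        exact h4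
      rw [h3]; nlinarith
    have hlam' : lam ∈ spectrum ℂ ((NormedSpace.exp (v • N)) ^ m) := by
      rw [hpowN v m, hsv]; exact hlam
    rw [spectrum.map_pow_of_pos _ hm0] at hlam'
    obtain ⟨μ, hμmem, hμpow'⟩ := hlam'
    have hμpow : μ ^ m = lam := hμpow'
    have hμne1 : μ ≠ 1 := fun h => hne1 (by rw [← hμpow, h, one_pow])
    have hμnorm : ‖μ‖ = 1 := hmod v μ hμmem
    have hμ0 : μ ≠ 0 := by intro h; rw [h] at hμnorm; simp at hμnorm
    have hμabs : ‖μ‖ = 1 := hμnorm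
    have hμsub := hsub μ hμmem
    have hμre : 7/8 < μ.re := by
      have h5 := hsq μ hμnorm
      nlinarith [norm_nonneg (μ - 1)]
    set θ : ℝ := μ.arg with hθdef
    have hμexp : Complex.exp ((θ:ℂ) * Complex.I) = μ := by
      have h := Complex.norm_mul_exp_arg_mul_I μ
      rwa [hμabs, Complex.ofReal_one, one_mul] at h
    have hθ0 : θ ≠ 0 := by
      intro h
      apply hμne1
      rw [← hμexp, h]
      simp
    have hcosθ : Real.cos θ = μ.re := by
      rw [hθdef, Complex.cos_arg hμ0, hμabs, div_one]
    have habs : |θ| ≤ Real.pi := Complex.abs_arg_le_pi μ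
    have hθhalf : |θ| ≤ Real.pi / 2 := by
      by_contra hgt
      push_neg at hgt
      have h1 : Real.cos |θ| ≤ 0 :=
        Real.cos_nonpos_of_pi_div_two_le_of_le hgt.le (by linarith [Real.pi_pos])
      rw [Real.cos_abs, hcosθ] at h1
      linarith
    set θ₀ : ℝ := |θ| with hθ₀
    have hθ₀pos : 0 < θ₀ := abs_pos.mpr hθ0
    set k : ℕ := ⌈(Real.pi/2)/θ₀⌉₊ with hk
    have hklow : Real.pi/2 ≤ (k:ℝ) * θ₀ := by
      rw [← div_le_iff₀ hθ₀pos]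
      exact Nat.le_ceil _
    have hkhigh : (k:ℝ) * θ₀ ≤ Real.pi + Real.pi/2 := by
      have h1 : (k:ℝ) < (Real.pi/2)/θ₀ + 1 := by
        rw [hk]; exact Nat.ceil_lt_add_one (by positivity)
      have h2 : (k:ℝ) * θ₀ < ((Real.pi/2)/θ₀ + 1) * θ₀ := mul_lt_mul_of_pos_right h1 hθ₀pos
      have h3 : ((Real.pi/2)/θ₀ + 1) * θ₀ = Real.pi/2 + θ₀ := by field_simp
      nlinarith [Real.pi_pos]
    have hcosk : Real.cos ((k:ℝ) * θ₀) ≤ 0 :=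
      Real.cos_nonpos_of_pi_div_two_le_of_le hklow hkhigh
    obtain ⟨n, hn⟩ : ∃ n : ℤ, (n:ℝ) * θ = (k:ℝ) * θ₀ := by
      rcases le_or_gt 0 θ with h | h
      · exact ⟨(k:ℤ), by rw [hθ₀, abs_of_nonneg h]; push_cast; ring⟩
      · exact ⟨-(k:ℤ), by rw [hθ₀, abs_of_neg h]; push_cast; ring⟩
    have hper := hcyc (NormedSpace.exp (v • L)) (NormedSpace.exp (v • N)) (hFext v)
      (hCP v) (hPB v) (hradius v)
    have hμS : ((1:ℝ):ℂ) * Complex.exp ((θ:ℂ) * Complex.I) ∈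
        {μ' : ℂ | μ' ∈ spectrum ℂ (NormedSpace.exp (v • N)) ∧
          (‖μ'‖₊ : ℝ≥0∞) = spectralRadius ℂ (NormedSpace.exp (v • N))} := by
      rw [Complex.ofReal_one, one_mul, hμexp]
      exact ⟨hμmem, by rw [hradius v]; exact hnn1 v μ hμmem⟩
    have hν := hper 1 θ zero_le_one hμS n
    rw [Complex.ofReal_one, one_mul] at hν
    obtain ⟨hνmem, -⟩ := hν
    set ν : ℂ := Complex.exp ((n:ℂ) * (θ:ℂ) * Complex.I) with hν'
    have hνcast : ν = Complex.exp ((((n:ℝ) * θ : ℝ) : ℂ) * Complex.I) := by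
      rw [hν']; push_cast; ring_nf
    have hνnorm : ‖ν‖ = 1 := hmod v ν hνmem
    have hνsub := hsub ν hνmem
    have hνre : ν.re = Real.cos ((n:ℝ) * θ) := by
      rw [hνcast]; exact Complex.exp_ofReal_mul_I_re _
    have h6 := hsq ν hνnorm
    rw [hνre, hn] at h6
    nlinarith [norm_nonneg (ν - 1)]
  have hNspec : spectrum ℂ N ⊆ {0} := by
    intro z hz
    simp only [Set.mem_singleton_iff]
    by_contra hz0
    have hexp1 : ∀ s : ℝ, Complex.exp ((s:ℂ) * z) = 1 := by
      intro s
      rcases eq_or_ne s 0 with rfl | hs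
      · simp
      · have hsne : ((s:ℝ):ℂ) ≠ 0 := Complex.ofReal_ne_zero.mpr hs
        have hsu : (Units.mk0 ((s:ℝ):ℂ) hsne) • z ∈
            spectrum ℂ ((Units.mk0 ((s:ℝ):ℂ) hsne) • N) := spectrum.smul_mem_smul_iff.mpr hz
        have h2 : (Units.mk0 ((s:ℝ):ℂ) hsne) • N = s • N := by
          rw [Units.smul_def]
          exact Complex.coe_smul s N
        have h3 : (Units.mk0 ((s:ℝ):ℂ) hsne) • z = (s:ℂ) * z := rfl
        rw [h2, h3] at hsu
        have h4 := spectrum.exp_mem_exp (s • N) hsu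
        rw [hspec s, Set.mem_singleton_iff] at h4
        rw [Complex.exp_eq_exp_ℂ]
        exact h4
    obtain ⟨a, ha⟩ := Complex.exp_eq_one_iff.mp (by simpa using hexp1 1)
    obtain ⟨b, hb⟩ := Complex.exp_eq_one_iff.mp (hexp1 (Real.sqrt 2))
    have ha0 : a ≠ 0 := by
      rintro rfl
      simp only [Int.cast_zero, zero_mul] at ha
      exact hz0 ha
    have hpiI : (2 * (Real.pi:ℂ) * Complex.I) ≠ 0 := by
      simp [Real.pi_ne_zero, Complex.I_ne_zero]
    have hkey : ((Real.sqrt 2 : ℝ):ℂ) * (a:ℂ) = (b:ℂ) := by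
      have h2 : ((Real.sqrt 2 : ℝ):ℂ) * ((a:ℂ) * (2 * (Real.pi:ℂ) * Complex.I)) =
          (b:ℂ) * (2 * (Real.pi:ℂ) * Complex.I) := by rw [← ha]; exact hb
      have h3 : (((Real.sqrt 2 : ℝ):ℂ) * (a:ℂ)) * (2 * (Real.pi:ℂ) * Complex.I) =
          (b:ℂ) * (2 * (Real.pi:ℂ) * Complex.I) := by rw [← h2]; ring
      exact mul_right_cancel₀ hpiI h3
    have hreal2 : Real.sqrt 2 * (a:ℝ) = (b:ℝ) := by exact_mod_cast hkey
    have ha0' : (a:ℝ) ≠ 0 := Int.cast_ne_zero.mpr ha0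
    have hsqrt : Real.sqrt 2 = (b:ℝ) / (a:ℝ) := by
      rw [eq_div_iff ha0']; exact hreal2
    exact irrational_sqrt_two ⟨(b:ℚ)/(a:ℚ), by rw [hsqrt]; push_cast; ring⟩
  have hNreal : ∀ x : ℝ, ‖NormedSpace.exp ((x:ℂ) • N)‖ ≤ 2 * C := by
    intro x
    rw [Complex.coe_smul]
    exact hFnorm x
  have hN0 : N = 0 :=
    CPAuxE.group_quasinilpotent_eq_zero (by linarith : (1:ℝ) ≤ 2 * C) hNreal hNspec
  have hL0 : L = 0 := by
    ext x
    have h1 := CPAux.extendsOp_cx L x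
    rw [← hN, hN0] at h1
    have h2 : ((L x : selfAdjoint A) : A) = 0 := by
      rw [← h1]; rfl
    simpa using h2
  rw [hL0, show t • (0 : selfAdjoint A →L[ℝ] selfAdjoint A) = 0 from
    ContinuousLinearMap.ext fun x => by simp,
    NormedSpace.exp_zero]
  rfl
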